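/- Let α, β > 0 and (v, θ, ω) ∈ ℝ³ with H₁(v,θ,ω) < 0 and H₂(v,θ,ω) < 0. Set D = 2ω² + α²v²/β² − 4αθ. Then D > α²v²/β², and with s₁ = 1, s₂ ∈ {−1,1} satisfying s₂·v = −|v|, t₁ = (−2ω − α|v|/β + √D)/(2α), t₂ = |v|/β, and t₃ = (−α|v|/β + √D)/(2α), one has t₁ > 0 and t₃ > 0, and the C2a final state from (v, θ, ω) equals (0, 0, 0). -/

import Mathlib

noncomputable def H1 (α v θ ω : ℝ) : ℝ := 2 * α * θ + ω * |ω|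

noncomputable def H2 (α β v θ ω : ℝ) : ℝ := ω * |ω| / (2 * α) + θ + ω * |v| / β

/-- The C2a final state `(v_f, θ_f, ω_f)`. -/
noncomputable def c2aFinal (α β v θ ω t₁ t₂ t₃ s₁ s₂ : ℝ) : ℝ × ℝ × ℝ :=
  (v + s₂ * β * t₂,
   θ + ω * t₁ + s₁ * α * t₁ ^ 2 / 2 + (ω + s₁ * α * t₁) * (t₂ + t₃) - s₁ * α * t₃ ^ 2 / 2,
   ω + s₁ * α * t₁ - s₁ * α * t₃)

private lemma c2a_theta_aux (α β θ ω m r : ℝ) (hα : α ≠ 0) (hβ : β ≠ 0) :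
    θ + ω * ((-2 * ω - α * m / β + r) / (2 * α)) +
        1 * α * ((-2 * ω - α * m / β + r) / (2 * α)) ^ 2 / 2 +
        (ω + 1 * α * ((-2 * ω - α * m / β + r) / (2 * α))) *
          (m / β + (-(α * m / β) + r) / (2 * α)) -
        1 * α * ((-(α * m / β) + r) / (2 * α)) ^ 2 / 2
      = (r ^ 2 - (2 * ω ^ 2 + α ^ 2 * m ^ 2 / β ^ 2 - 4 * α * θ)) / (4 * α) := by
  field_simp
  ring

theorem stmt1 (α β v θ ω : ℝ) (hα : 0 < α) (hβ : 0 < β)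
    (hH1 : H1 α v θ ω < 0) (hH2 : H2 α β v θ ω < 0)
    (D : ℝ) (hD : D = 2 * ω ^ 2 + α ^ 2 * v ^ 2 / β ^ 2 - 4 * α * θ)
    (s₁ s₂ : ℝ) (hs₁ : s₁ = 1) (hs₂ : s₂ = -1 ∨ s₂ = 1) (hs₂v : s₂ * v = -|v|)
    (t₁ t₂ t₃ : ℝ)
    (ht₁ : t₁ = (-2 * ω - α * |v| / β + Real.sqrt D) / (2 * α))
    (ht₂ : t₂ = |v| / β)
    (ht₃ : t₃ = (-(α * |v| / β) + Real.sqrt D) / (2 * α)) :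
    D > α ^ 2 * v ^ 2 / β ^ 2 ∧ 0 < t₁ ∧ 0 < t₃ ∧
    c2aFinal α β v θ ω t₁ t₂ t₃ s₁ s₂ = (0, 0, 0) := by
  have hβ' : β ≠ 0 := ne_of_gt hβ
  have hα' : α ≠ 0 := ne_of_gt hα
  have hH1' : 2 * α * θ + ω * |ω| < 0 := hH1
  have hH2' : ω * |ω| / (2 * α) + θ + ω * |v| / β < 0 := hH2
  have hkey : 2 * α * θ < ω ^ 2 := by
    nlinarith [neg_le_abs ω, abs_nonneg ω, sq_abs ω]
  have hDgt : D > α ^ 2 * v ^ 2 / β ^ 2 := by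
    rw [hD]; linarith
  have hDpos : 0 < D := lt_of_le_of_lt (by positivity) hDgt
  have hr : Real.sqrt D ^ 2 = D := Real.sq_sqrt hDpos.le
  have hm : (α * |v| / β) ^ 2 = α ^ 2 * v ^ 2 / β ^ 2 := by
    rw [div_pow, mul_pow, sq_abs]
  have hs3 : α * |v| / β < Real.sqrt D := by
    rw [show α * |v| / β = Real.sqrt ((α * |v| / β) ^ 2) from
      (Real.sqrt_sq (by positivity)).symm]
    exact Real.sqrt_lt_sqrt (by positivity) (by rw [hm]; exact hDgt)
  have ht₃pos : 0 < t₃ := by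
    rw [ht₃]; apply div_pos; linarith; linarith
  have hs1' : 2 * ω + α * |v| / β < Real.sqrt D := by
    rcases le_or_gt ω 0 with hω | hω
    · linarith
    · have habs : |ω| = ω := abs_of_pos hω
      rw [habs] at hH2'
      have h2 : ω ^ 2 + 2 * α * θ + 2 * ω * (α * |v| / β) < 0 := by
        have heq : ω ^ 2 + 2 * α * θ + 2 * ω * (α * |v| / β)
            = 2 * α * (ω * ω / (2 * α) + θ + ω * |v| / β) := by
          field_simp
        rw [heq]
        exact mul_neg_of_pos_of_neg (by linarith) hH2'
      have hsq : (2 * ω + α * |v| / β) ^ 2 < D := by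
        have hDc : D = 2 * ω ^ 2 + (α * |v| / β) ^ 2 - 4 * α * θ := by
          rw [hm]; exact hD
        rw [hDc]; nlinarith [h2]
      calc 2 * ω + α * |v| / β = Real.sqrt ((2 * ω + α * |v| / β) ^ 2) :=
            (Real.sqrt_sq (by positivity)).symm
        _ < Real.sqrt D := Real.sqrt_lt_sqrt (by positivity) hsq
  have ht₁pos : 0 < t₁ := by
    rw [ht₁]; apply div_pos; linarith; linarith
  refine ⟨hDgt, ht₁pos, ht₃pos, ?_⟩
  have hv : v = -(s₂ * |v|) := by
    rcases hs₂ with h | h <;> subst h <;> linarith [hs₂v]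
  unfold c2aFinal
  subst hs₁ ht₁ ht₂ ht₃
  refine Prod.ext ?_ (Prod.ext ?_ ?_)
  · simp only
    field_simp
    linear_combination hv
  · simp only
    rw [c2a_theta_aux α β θ ω |v| (Real.sqrt D) hα' hβ', hr, hD, sq_abs]
    ring
  · simp only
    field_simp
    ring
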